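/- There exists an integer T₀ such that for every integer T ≥ T₀: √(K̂β)·cos(π/(T+1)) + √((K̂·cos²(π/(T+1)) − K̄)·β) ≤ √(ρ(A_T)) ≤ √(K̂β)·cos(π/(2T+1)) + √((K̂·cos²(π/(2T+1)) − K̄)·β). Consequently, writing ρ(A_T) = −K̄β + 2√(ρ(A_T)·β·K̂)·cos(θ_T) with θ_T ∈ (0, π), one has cos(π/(T+1)) ≤ cos(θ_T) ≤ cos(π/(2T+1)) for all sufficiently large T. -/

import Mathlib

noncomputable section

/-- The spectral radius of a real square matrix: the maximum modulus of its
complex eigenvalues. -/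
def specRad {n : ℕ} (A : Matrix (Fin n) (Fin n) ℝ) : ℝ :=
  sSup {x : ℝ | ∃ μ : ℂ, μ ∈ spectrum ℂ (A.map Complex.ofReal) ∧ x = ‖μ‖}

/-- `L̄ = L₁ / (1 - β K₁ / 2)`. -/
def Lbar (L1 K1 β : ℝ) : ℝ := L1 / (1 - β * K1 / 2)

/-- `K̄ = 3K₁/2 + K₁ L̄ / (2 ρ (1 - β))`. -/
def Kbar (L1 K1 rho β : ℝ) : ℝ := 3 * K1 / 2 + K1 * Lbar L1 K1 β / (2 * rho * (1 - β))

/-- `K̂ = K̄ + K₁ L̄ / ρ`. -/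
def Khat (L1 K1 rho β : ℝ) : ℝ := Kbar L1 K1 rho β + K1 * Lbar L1 K1 β / rho

/-- `r = K̄ β + (K₁/ρ) L₁ β`. -/
def rconst (L1 K1 rho β : ℝ) : ℝ := Kbar L1 K1 rho β * β + (K1 / rho) * L1 * β

/-- The `T × T` matrix `A_T` (1-based indices `1 ≤ i, j ≤ T` correspond to `0`-based
`Fin T` values `i-1, j-1`): entry `K̄ + L̄K₁/ρ` if `j = i - 1`, entry `(L̄K₁/ρ) β^(j-i+1)`
if `i - 1 < j ≤ T - 1`, entry `(L₁K₁/ρ) β^(T-i+1)` if `j = T`, and `0` if `j < i - 1`. -/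
def AT (L1 K1 rho β : ℝ) (T : ℕ) : Matrix (Fin T) (Fin T) ℝ :=
  fun i j =>
    if (j : ℕ) + 1 = T then (L1 * K1 / rho) * β ^ (T - (i : ℕ))
    else if (j : ℕ) + 1 = (i : ℕ) then Kbar L1 K1 rho β + Lbar L1 K1 β * K1 / rho
    else if (i : ℕ) ≤ (j : ℕ) then (Lbar L1 K1 β * K1 / rho) * β ^ ((j : ℕ) - (i : ℕ) + 1)
    else 0

end

noncomputable section AuxProof

open Matrix Filter
open scoped ENNReal NNReal Topology

attribute [local instance] Matrix.linftyOpNormedAddCommGroup Matrix.linftyOpNormedRing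
  Matrix.linftyOpNormedAlgebra

variable {T : ℕ}

private lemma nnnorm_map_ofReal (M : Matrix (Fin T) (Fin T) ℝ) :
    ‖M.map Complex.ofReal‖₊ = ‖M‖₊ := by
  simp [Matrix.linfty_opNNNorm_def, Matrix.map_apply]

private lemma specRad_le_of_mulVec_le (hT : 0 < T) (A : Matrix (Fin T) (Fin T) ℝ)
    (hA : ∀ i j, 0 ≤ A i j) (w : Fin T → ℝ) (hw : ∀ i, 0 < w i) {lam : ℝ} (hlam : 0 ≤ lam)
    (h : ∀ i, A.mulVec w i ≤ lam * w i) : specRad A ≤ lam := by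
  haveI : Nonempty (Fin T) := Fin.pos_iff_nonempty.mp hT
  set Mc := A.map Complex.ofReal with hMc
  have hwne : ∀ i, ((w i : ℝ) : ℂ) ≠ 0 := fun i => by
    exact_mod_cast (hw i).ne'
  set u : (Matrix (Fin T) (Fin T) ℂ)ˣ :=
    { val := Matrix.diagonal fun i => (((w i)⁻¹ : ℝ) : ℂ)
      inv := Matrix.diagonal fun i => ((w i : ℝ) : ℂ)
      val_inv := by
        rw [Matrix.diagonal_mul_diagonal]
        convert Matrix.diagonal_one using 2
        funext i
        push_cast
        exact inv_mul_cancel₀ (hwne i)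
      inv_val := by
        rw [Matrix.diagonal_mul_diagonal]
        convert Matrix.diagonal_one using 2
        funext i
        push_cast
        exact mul_inv_cancel₀ (hwne i) } with hu
  have hval : (u : Matrix (Fin T) (Fin T) ℂ) = Matrix.diagonal fun i => (((w i)⁻¹ : ℝ) : ℂ) := rfl
  have hinv : ((u⁻¹ : _ˣ) : Matrix (Fin T) (Fin T) ℂ)
      = Matrix.diagonal fun i => ((w i : ℝ) : ℂ) := rfl
  have hspec : spectrum ℂ (u * Mc * (u⁻¹ : _ˣ) : Matrix (Fin T) (Fin T) ℂ) = spectrum ℂ Mc :=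
    spectrum.units_conjugate
  have hnormB : ‖(u * Mc * (u⁻¹ : _ˣ) : Matrix (Fin T) (Fin T) ℂ)‖ ≤ lam := by
    rw [Matrix.linfty_opNorm_def]
    have key : ((Finset.univ : Finset (Fin T)).sup fun i =>
        ∑ j, ‖(u * Mc * (u⁻¹ : _ˣ) : Matrix (Fin T) (Fin T) ℂ) i j‖₊) ≤ lam.toNNReal := by
      refine Finset.sup_le fun i _ => ?_
      have hBij : ∀ j, (u * Mc * (u⁻¹ : _ˣ) : Matrix (Fin T) (Fin T) ℂ) i j
          = (((w i)⁻¹ * A i j * w j : ℝ) : ℂ) := by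
        intro j
        rw [hval, hinv, Matrix.mul_diagonal, Matrix.diagonal_mul]
        show (((w i)⁻¹ : ℝ) : ℂ) * (((A i j : ℝ)) : ℂ) * ((w j : ℝ) : ℂ) = _
        push_cast
        ring
      rw [← NNReal.coe_le_coe, NNReal.coe_sum]
      simp only [coe_nnnorm]
      calc ∑ j, ‖(u * Mc * (u⁻¹ : _ˣ) : Matrix (Fin T) (Fin T) ℂ) i j‖
          = ∑ j, ‖(w i)⁻¹ * A i j * w j‖ := by
            refine Finset.sum_congr rfl fun j _ => ?_
            rw [hBij j, Complex.norm_real]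
        _ = ∑ j, (w i)⁻¹ * (A i j * w j) := by
            refine Finset.sum_congr rfl fun j _ => ?_
            rw [Real.norm_eq_abs, abs_of_nonneg
              (mul_nonneg (mul_nonneg (inv_nonneg.2 (hw i).le) (hA i j)) (hw j).le), mul_assoc]
        _ = (w i)⁻¹ * A.mulVec w i := by rw [← Finset.mul_sum]; rfl
        _ ≤ (w i)⁻¹ * (lam * w i) :=
            mul_le_mul_of_nonneg_left (h i) (inv_nonneg.2 (hw i).le)
        _ = lam := by rw [mul_comm lam (w i), inv_mul_cancel_left₀ (hw i).ne']
        _ = (lam.toNNReal : ℝ) := (Real.coe_toNNReal _ hlam).symm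
    have key2 := NNReal.coe_le_coe.mpr key
    rw [Real.coe_toNNReal _ hlam] at key2
    exact key2
  refine Real.sSup_le ?_ hlam
  rintro x ⟨μ, hμ, rfl⟩
  rw [← hspec] at hμ
  calc (‖μ‖ : ℝ) = ‖μ‖ := rfl
    _ ≤ ‖(u * Mc * (u⁻¹ : _ˣ) : Matrix (Fin T) (Fin T) ℂ)‖ := spectrum.norm_le_norm_of_mem hμ
    _ ≤ lam := hnormB

private lemma mulVec_mono (A : Matrix (Fin T) (Fin T) ℝ) (hA : ∀ i j, 0 ≤ A i j)
    {v v' : Fin T → ℝ} (hv : ∀ j, v j ≤ v' j) (i : Fin T) :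
    A.mulVec v i ≤ A.mulVec v' i := by
  simp only [Matrix.mulVec, dotProduct]
  exact Finset.sum_le_sum fun j _ => mul_le_mul_of_nonneg_left (hv j) (hA i j)

private lemma le_specRad_of_le_mulVec (hT : 0 < T) (A : Matrix (Fin T) (Fin T) ℝ)
    (hA : ∀ i j, 0 ≤ A i j) (w : Fin T → ℝ) (hw : ∀ i, 0 < w i) {lam : ℝ} (hlam : 0 ≤ lam)
    (h : ∀ i, lam * w i ≤ A.mulVec w i) : lam ≤ specRad A := by
  haveI : Nonempty (Fin T) := Fin.pos_iff_nonempty.mp hT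
  set Mc := A.map Complex.ofReal with hMc
  have hpow : ∀ n : ℕ, (∀ i j, 0 ≤ (A ^ n) i j) ∧ ∀ i, lam ^ n * w i ≤ (A ^ n).mulVec w i := by
    intro n
    induction n with
    | zero =>
      refine ⟨fun i j => ?_, fun i => by simp [Matrix.one_mulVec]⟩
      rw [pow_zero]
      by_cases hij : i = j <;> simp [Matrix.one_apply, hij]
    | succ n ih =>
      have hpowsucc : A ^ (n + 1) = A * A ^ n := by rw [pow_succ']
      refine ⟨fun i j => ?_, fun i => ?_⟩
      · rw [hpowsucc, Matrix.mul_apply]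
        exact Finset.sum_nonneg fun k _ => mul_nonneg (hA i k) (ih.1 k j)
      · rw [hpowsucc, ← Matrix.mulVec_mulVec]
        calc lam ^ (n + 1) * w i = lam ^ n * (lam * w i) := by ring
          _ ≤ lam ^ n * A.mulVec w i :=
              mul_le_mul_of_nonneg_left (h i) (pow_nonneg hlam n)
          _ = A.mulVec (fun j => lam ^ n * w j) i := by
              rw [show A.mulVec (fun j => lam ^ n * w j) i = ∑ j, A i j * (lam ^ n * w j) from rfl]
              rw [show A.mulVec w i = ∑ j, A i j * w j from rfl, Finset.mul_sum]
              exact Finset.sum_congr rfl fun j _ => by ring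
          _ ≤ A.mulVec ((A ^ n).mulVec w) i :=
              mulVec_mono A hA (fun j => ih.2 j) i
  have hnorm : ∀ n : ℕ, lam ^ n ≤ ‖A ^ n‖ := by
    intro n
    obtain ⟨i0, _, hi0⟩ := Finset.exists_max_image (Finset.univ : Finset (Fin T)) w
      ⟨Classical.arbitrary _, Finset.mem_univ _⟩
    have hwle : ‖w‖ ≤ w i0 := by
      rw [pi_norm_le_iff_of_nonneg (hw i0).le]
      intro i
      rw [Real.norm_eq_abs, abs_of_pos (hw i)]
      exact hi0 i (Finset.mem_univ i)
    have h1 : lam ^ n * w i0 ≤ ‖A ^ n‖ * w i0 := by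
      calc lam ^ n * w i0 ≤ (A ^ n).mulVec w i0 := (hpow n).2 i0
        _ ≤ ‖(A ^ n).mulVec w‖ :=
            le_trans (le_abs_self _)
              (by rw [← Real.norm_eq_abs]; exact norm_le_pi_norm ((A ^ n).mulVec w) i0)
        _ ≤ ‖A ^ n‖ * ‖w‖ := Matrix.linfty_opNorm_mulVec _ _
        _ ≤ ‖A ^ n‖ * w i0 := mul_le_mul_of_nonneg_left hwle (norm_nonneg _)
    exact le_of_mul_le_mul_right h1 (hw i0)
  have hMn : ∀ n : ℕ, ‖Mc ^ n‖₊ = ‖A ^ n‖₊ := by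
    intro n
    have : Mc ^ n = (A ^ n).map Complex.ofReal := by
      rw [hMc]
      induction n with
      | zero => simp [Matrix.map_one]
      | succ n ihn =>
        rw [pow_succ, pow_succ, ihn]
        ext i j
        simp [Matrix.mul_apply, Matrix.map_apply]
    rw [this, nnnorm_map_ofReal]
  have hgel := spectrum.pow_nnnorm_pow_one_div_tendsto_nhds_spectralRadius Mc
  have hlow : ENNReal.ofReal lam ≤ spectralRadius ℂ Mc := by
    refine ge_of_tendsto hgel ?_
    filter_upwards [eventually_ge_atTop 1] with n hn
    have hle : lam.toNNReal ^ n ≤ ‖Mc ^ n‖₊ := by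
      rw [hMn n, ← Real.toNNReal_pow hlam]
      refine Real.toNNReal_le_iff_le_coe.mpr ?_
      rw [coe_nnnorm]
      exact hnorm n
    have hle2 : (ENNReal.ofReal lam) ^ n ≤ (‖Mc ^ n‖₊ : ℝ≥0∞) := by
      rw [ENNReal.ofReal, ← ENNReal.coe_pow]
      exact ENNReal.coe_le_coe.mpr hle
    calc ENNReal.ofReal lam
        = ((ENNReal.ofReal lam) ^ n) ^ (1 / n : ℝ) := by
          rw [← ENNReal.rpow_natCast _ n, ← ENNReal.rpow_mul]
          rw [mul_one_div, div_self (by exact_mod_cast Nat.one_le_iff_ne_zero.mp hn : (n : ℝ) ≠ 0)]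
          rw [ENNReal.rpow_one]
      _ ≤ (‖Mc ^ n‖₊ : ℝ≥0∞) ^ (1 / n : ℝ) :=
          ENNReal.rpow_le_rpow hle2 (by positivity)
  have hS_bdd : BddAbove {x : ℝ | ∃ μ : ℂ, μ ∈ spectrum ℂ Mc ∧ x = ‖μ‖} := by
    refine ⟨‖Mc‖, ?_⟩
    rintro x ⟨μ, hμ, rfl⟩
    exact spectrum.norm_le_norm_of_mem hμ
  have hhi : spectralRadius ℂ Mc ≤ ENNReal.ofReal (specRad A) := by
    rw [spectralRadius]
    refine iSup₂_le fun μ hμ => ?_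
    have hmem : ‖μ‖ ∈ {x : ℝ | ∃ μ' : ℂ, μ' ∈ spectrum ℂ Mc ∧ x = ‖μ'‖} :=
      ⟨μ, hμ, rfl⟩
    have hle3 : ‖μ‖ ≤ specRad A := le_csSup hS_bdd hmem
    calc (‖μ‖₊ : ℝ≥0∞) = ENNReal.ofReal (‖μ‖) := by
          exact (ofReal_norm μ).symm
      _ ≤ ENNReal.ofReal (specRad A) := ENNReal.ofReal_le_ofReal hle3
  have hfinal := le_trans hlow hhi
  have hspecnn : 0 ≤ specRad A :=
    Real.sSup_nonneg fun x ⟨μ, _, hx⟩ => hx ▸ norm_nonneg μ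
  exact (ENNReal.ofReal_le_ofReal_iff hspecnn).mp hfinal

private lemma specRad_nonneg (A : Matrix (Fin T) (Fin T) ℝ) : 0 ≤ specRad A :=
  Real.sSup_nonneg fun x ⟨μ, _, hx⟩ => hx ▸ norm_nonneg μ

/-! ### Row computations for `AT` -/

private lemma AT_row_diff (L1 K1 rho β : ℝ) (i i' j : Fin T) (h' : (i : ℕ) + 1 = (i' : ℕ)) :
    AT L1 K1 rho β T i j - β * AT L1 K1 rho β T i' j =
      (if (j : ℕ) + 1 = (i : ℕ) then Kbar L1 K1 rho β + Lbar L1 K1 β * K1 / rho else 0)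
      + (if (j : ℕ) = (i : ℕ) then -(β * Kbar L1 K1 rho β) else 0) := by
  have hjT := j.isLt
  have hiT := i.isLt
  have hi'T := i'.isLt
  simp only [AT]
  by_cases h1 : (j : ℕ) + 1 = T
  · rw [if_pos h1, if_pos h1, if_neg (by omega : ¬((j:ℕ) + 1 = (i:ℕ))),
      if_neg (by omega : ¬((j:ℕ) = (i:ℕ)))]
    have he : T - (i : ℕ) = (T - (i' : ℕ)) + 1 := by omega
    rw [he, pow_succ]
    ring
  · rw [if_neg h1, if_neg h1]
    by_cases h2 : (j : ℕ) + 1 = (i : ℕ)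
    · rw [if_pos h2, if_pos h2, if_neg (by omega : ¬((j:ℕ) + 1 = (i':ℕ))),
        if_neg (by omega : ¬((i':ℕ) ≤ (j:ℕ))), if_neg (by omega : ¬((j:ℕ) = (i:ℕ)))]
      ring
    · rw [if_neg h2, if_neg h2]
      by_cases h3 : (j : ℕ) = (i : ℕ)
      · rw [if_pos (by omega : (i:ℕ) ≤ (j:ℕ)), if_pos (by omega : (j:ℕ) + 1 = (i':ℕ)),
          if_pos h3]
        have he : (j : ℕ) - (i : ℕ) + 1 = 1 := by omega
        rw [he, pow_one]
        ring
      · by_cases h4 : (i : ℕ) ≤ (j : ℕ)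
        · rw [if_pos h4, if_neg (by omega : ¬((j:ℕ) + 1 = (i':ℕ))),
            if_pos (by omega : (i':ℕ) ≤ (j:ℕ)), if_neg h3]
          have he : (j : ℕ) - (i : ℕ) + 1 = ((j : ℕ) - (i' : ℕ) + 1) + 1 := by omega
          rw [he, pow_succ]
          ring
        · rw [if_neg h4, if_neg (by omega : ¬((j:ℕ) + 1 = (i':ℕ))),
            if_neg (by omega : ¬((i':ℕ) ≤ (j:ℕ))), if_neg h3]
          ring

private lemma AT_last_row (L1 K1 rho β : ℝ) (hT : 2 ≤ T) (j : Fin T) :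
    AT L1 K1 rho β T ⟨T - 1, by omega⟩ j =
      (if (j : ℕ) + 1 = T - 1 then Kbar L1 K1 rho β + Lbar L1 K1 β * K1 / rho else 0)
      + (if (j : ℕ) + 1 = T then (L1 * K1 / rho) * β else 0) := by
  have hjT := j.isLt
  simp only [AT]
  by_cases h1 : (j : ℕ) + 1 = T
  · rw [if_pos h1, if_neg (by omega : ¬((j:ℕ) + 1 = T - 1)), if_pos h1]
    have he : T - (T - 1) = 1 := by omega
    rw [he, pow_one]
    ring
  · rw [if_neg h1, if_neg h1]
    by_cases h2 : (j : ℕ) + 1 = T - 1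
    · rw [if_pos h2, if_pos h2]
      ring
    · rw [if_neg h2, if_neg h2, if_neg (by omega : ¬(T - 1 ≤ (j:ℕ)))]
      ring

private lemma sum_shift (u : ℕ → ℝ) (hu0 : u 0 = 0) (a : ℝ) (k : ℕ) (hk : k ≤ T) :
    ∑ j : Fin T, (if (j : ℕ) + 1 = k then a else 0) * u ((j : ℕ) + 1) = a * u k := by
  rcases Nat.eq_zero_or_pos k with h | h
  · subst h
    rw [hu0, mul_zero]
    refine Finset.sum_eq_zero fun j _ => ?_
    rw [if_neg (by omega), zero_mul]
  · rw [Fintype.sum_eq_single (⟨k - 1, by omega⟩ : Fin T)]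
    · rw [if_pos (by simp; omega)]
      congr 2
      simp; omega
    · intro j hj
      rw [if_neg (by simp [Fin.ext_iff] at hj ⊢; omega), zero_mul]

private lemma sum_diag (u : ℕ → ℝ) (b : ℝ) (k : ℕ) (hk : k < T) :
    ∑ j : Fin T, (if (j : ℕ) = k then b else 0) * u ((j : ℕ) + 1) = b * u (k + 1) := by
  rw [Fintype.sum_eq_single (⟨k, hk⟩ : Fin T)]
  · simp
  · intro j hj
    rw [if_neg (by simpa [Fin.ext_iff] using hj), zero_mul]

private lemma telescope (hT : 1 ≤ T) (S W : Fin T → ℝ) (β lam : ℝ)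
    (hrec : ∀ i i' : Fin T, (i : ℕ) + 1 = (i' : ℕ) →
      S i - lam * W i = β * (S i' - lam * W i'))
    (i : Fin T) :
    S i - lam * W i = β ^ (T - 1 - (i : ℕ))
      * (S ⟨T - 1, by omega⟩ - lam * W ⟨T - 1, by omega⟩) := by
  suffices H : ∀ m : ℕ, ∀ i : Fin T, T - 1 - (i : ℕ) = m →
      S i - lam * W i = β ^ m * (S ⟨T - 1, by omega⟩ - lam * W ⟨T - 1, by omega⟩) by
    exact H _ i rfl
  intro m
  induction m with
  | zero =>
    intro i hi
    have := i.isLt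
    have hieq : i = ⟨T - 1, by omega⟩ := by
      apply Fin.ext; simp; omega
    rw [hieq, pow_zero, one_mul]
  | succ m ih =>
    intro i hi
    have hlt := i.isLt
    have hi1 : (i : ℕ) + 1 < T := by omega
    have hstep := hrec i ⟨(i : ℕ) + 1, hi1⟩ rfl
    rw [hstep, ih ⟨(i : ℕ) + 1, hi1⟩ (by simp; omega), pow_succ]
    ring

/-! ### Analytic lemmas -/

private lemma eigen_rel {Kb Kh β cθ : ℝ} (hβ : 0 < β) (hKh : 0 < Kh)
    (hc : 0 < cθ) (hq : Kb ≤ Kh * cθ ^ 2) {s : ℝ}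
    (hs : s = Real.sqrt (Kh * β) * cθ + Real.sqrt ((Kh * cθ ^ 2 - Kb) * β)) :
    0 < s ∧ s ^ 2 + β * Kb = 2 * Real.sqrt (β * s ^ 2 * Kh) * cθ
      ∧ β * (2 * Kh * cθ ^ 2 - Kb) ≤ s ^ 2 := by
  set a := Real.sqrt (Kh * β) with ha
  set y := Real.sqrt ((Kh * cθ ^ 2 - Kb) * β) with hy
  have ha2 : a ^ 2 = Kh * β := Real.sq_sqrt (by positivity)
  have hy2 : y ^ 2 = (Kh * cθ ^ 2 - Kb) * β :=
    Real.sq_sqrt (mul_nonneg (by linarith) hβ.le)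
  have hapos : 0 < a := Real.sqrt_pos.mpr (by positivity)
  have hynn : 0 ≤ y := Real.sqrt_nonneg _
  have hs_pos : 0 < s := by
    have h1 : 0 < a * cθ := mul_pos hapos hc
    rw [hs]; positivity
  refine ⟨hs_pos, ?_, ?_⟩
  · have hsqrt : Real.sqrt (β * s ^ 2 * Kh) = s * a := by
      rw [show β * s ^ 2 * Kh = s ^ 2 * (Kh * β) by ring, Real.sqrt_mul (sq_nonneg s),
        Real.sqrt_sq hs_pos.le, ← ha]
    rw [hsqrt, hs]
    linear_combination hy2 - cθ ^ 2 * ha2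
  · rw [hs]
    nlinarith [mul_nonneg (mul_nonneg hapos.le hc.le) hynn]

private lemma urec {Kb Kh β lam θ : ℝ} (hβ : 0 < β) (hlam : 0 < lam) (hKh : 0 < Kh)
    (hid : lam + β * Kb = 2 * Real.sqrt (β * lam * Kh) * Real.cos θ)
    {r : ℝ} (hr : r = Real.sqrt (Kh / (β * lam)))
    (u : ℕ → ℝ) (hu : ∀ m : ℕ, u m = r ^ m * Real.sin (m * θ)) (n : ℕ) :
    β * lam * u (n + 2) + Kh * u n = (lam + β * Kb) * u (n + 1) := by
  have hr2 : β * lam * r ^ 2 = Kh := by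
    rw [hr, Real.sq_sqrt (by positivity : (0:ℝ) ≤ Kh / (β * lam))]
    field_simp
  have hKr : Real.sqrt (β * lam * Kh) * r = Kh := by
    rw [hr, show Real.sqrt (β * lam * Kh) * Real.sqrt (Kh / (β * lam))
        = Real.sqrt ((β * lam * Kh) * (Kh / (β * lam))) from (Real.sqrt_mul (by positivity) _).symm,
      show (β * lam * Kh) * (Kh / (β * lam)) = Kh ^ 2 by field_simp]
    exact Real.sqrt_sq hKh.le
  have hsin : Real.sin ((n + 2 : ℕ) * θ) + Real.sin ((n : ℕ) * θ)
      = 2 * Real.sin ((n + 1 : ℕ) * θ) * Real.cos θ := by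
    push_cast
    rw [show ((n : ℝ) + 2) * θ = (n + 1) * θ + θ by ring,
      show (n : ℝ) * θ = (n + 1) * θ - θ by ring, Real.sin_add, Real.sin_sub]
    ring
  rw [hu (n + 2), hu n, hu (n + 1), hid, pow_add, pow_add, pow_one]
  linear_combination (r ^ n * Real.sin ((n + 2 : ℕ) * θ)) * hr2
    - (2 * Real.cos θ * Real.sin ((n + 1 : ℕ) * θ) * r ^ n) * hKr
    + (Kh * r ^ n) * hsin

private lemma sqrt_hKr {Kh β lam : ℝ} (hβ : 0 < β) (hlam : 0 < lam) (hKh : 0 < Kh) :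
    Real.sqrt (β * lam * Kh) * Real.sqrt (Kh / (β * lam)) = Kh := by
  rw [show Real.sqrt (β * lam * Kh) * Real.sqrt (Kh / (β * lam))
      = Real.sqrt ((β * lam * Kh) * (Kh / (β * lam))) from (Real.sqrt_mul (by positivity) _).symm,
    show (β * lam * Kh) * (Kh / (β * lam)) = Kh ^ 2 by field_simp]
  exact Real.sqrt_sq hKh.le

section CoreLemmas
open Matrix

private lemma consts (L1 K1 rho β : ℝ) (hL1 : 0 < L1) (hK1 : 0 < K1) (hrho : 0 < rho)
    (hβ0 : 0 < β) (hβ1 : β < 1) (hβK : β * K1 < 2) :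
    0 < Lbar L1 K1 β ∧ 0 < Kbar L1 K1 rho β ∧ 0 < Khat L1 K1 rho β
      ∧ Kbar L1 K1 rho β + Lbar L1 K1 β * K1 / rho = Khat L1 K1 rho β
      ∧ 0 < L1 * K1 / rho ∧ L1 * K1 / rho < Lbar L1 K1 β * K1 / rho := by
  have hden : 0 < 1 - β * K1 / 2 := by linarith
  have hLb : 0 < Lbar L1 K1 β := div_pos hL1 hden
  have hKb : 0 < Kbar L1 K1 rho β := by
    refine add_pos (by positivity) (div_pos (mul_pos hK1 hLb) ?_)
    have : 0 < 1 - β := by linarith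
    positivity
  have hKh : 0 < Khat L1 K1 rho β :=
    add_pos hKb (div_pos (mul_pos hK1 hLb) hrho)
  have hL1Lb : L1 < Lbar L1 K1 β := by
    rw [Lbar, lt_div_iff₀ hden]
    nlinarith [mul_pos hL1 (mul_pos hβ0 hK1)]
  refine ⟨hLb, hKb, hKh, by rw [Khat]; ring, by positivity, ?_⟩
  rw [div_lt_div_iff₀ hrho hrho]
  nlinarith [mul_pos (mul_pos (sub_pos.2 hL1Lb) hK1) hrho]

private lemma AT_nonneg (L1 K1 rho β : ℝ) (hL1 : 0 < L1) (hK1 : 0 < K1) (hrho : 0 < rho)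
    (hβ0 : 0 < β) (hβ1 : β < 1) (hβK : β * K1 < 2) {T : ℕ} (i j : Fin T) :
    0 ≤ AT L1 K1 rho β T i j := by
  obtain ⟨hLb, hKb, hKh, hKheq, hd, hdc⟩ := consts L1 K1 rho β hL1 hK1 hrho hβ0 hβ1 hβK
  have hc' : 0 ≤ Lbar L1 K1 β * K1 / rho := by positivity
  simp only [AT]
  split_ifs with h1 h2 h3
  · exact mul_nonneg hd.le (pow_nonneg hβ0.le _)
  · exact add_nonneg hKb.le hc'
  · exact mul_nonneg hc' (pow_nonneg hβ0.le _)
  · exact le_refl 0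

private lemma core_setup (L1 K1 rho β : ℝ) (hL1 : 0 < L1) (hK1 : 0 < K1) (hrho : 0 < rho)
    (hβ0 : 0 < β) (hβ1 : β < 1) (hβK : β * K1 < 2) {T : ℕ} (hT2 : 2 ≤ T)
    {θ cθ s : ℝ} (hθ0 : 0 < θ) (hθT : (T : ℝ) * θ < Real.pi)
    (hcθ : cθ = Real.cos θ) (hcθ0 : 0 < cθ)
    (hq : Kbar L1 K1 rho β ≤ Khat L1 K1 rho β * cθ ^ 2)
    (hs : s = Real.sqrt (Khat L1 K1 rho β * β) * cθ
      + Real.sqrt ((Khat L1 K1 rho β * cθ ^ 2 - Kbar L1 K1 rho β) * β)) :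
    ∃ w : Fin T → ℝ, ∃ u : ℕ → ℝ,
      (∀ j : Fin T, w j = u ((j : ℕ) + 1)) ∧ (∀ j, 0 < w j)
      ∧ (∀ m : ℕ, 1 ≤ m → m ≤ T → 0 < u m)
      ∧ (∀ m : ℕ, u m = Real.sqrt (Khat L1 K1 rho β / (β * s ^ 2)) ^ m * Real.sin (m * θ))
      ∧ (∀ i i' : Fin T, (i : ℕ) + 1 = (i' : ℕ) →
          (AT L1 K1 rho β T).mulVec w i - s ^ 2 * w i
            = β * ((AT L1 K1 rho β T).mulVec w i' - s ^ 2 * w i'))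
      ∧ (AT L1 K1 rho β T).mulVec w ⟨T - 1, by omega⟩
          = Khat L1 K1 rho β * u (T - 1) + ((L1 * K1 / rho) * β) * u T
      ∧ (∀ n : ℕ, β * s ^ 2 * u (n + 2) + Khat L1 K1 rho β * u n
          = (s ^ 2 + β * Kbar L1 K1 rho β) * u (n + 1))
      ∧ 0 < s ∧ s ^ 2 + β * Kbar L1 K1 rho β
          = 2 * Real.sqrt (β * s ^ 2 * Khat L1 K1 rho β) * Real.cos θ
      ∧ β * (2 * Khat L1 K1 rho β * cθ ^ 2 - Kbar L1 K1 rho β) ≤ s ^ 2 := by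
  obtain ⟨hLb, hKb, hKh, hKheq, hd, hdc⟩ := consts L1 K1 rho β hL1 hK1 hrho hβ0 hβ1 hβK
  obtain ⟨hs_pos, hid0, hlow2⟩ := eigen_rel hβ0 hKh hcθ0 hq hs
  have hid : s ^ 2 + β * Kbar L1 K1 rho β
      = 2 * Real.sqrt (β * s ^ 2 * Khat L1 K1 rho β) * Real.cos θ := by
    rw [← hcθ]; exact hid0
  set lam := s ^ 2 with hlam_def
  have hlam_pos : 0 < lam := pow_pos hs_pos 2
  set r := Real.sqrt (Khat L1 K1 rho β / (β * lam)) with hr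
  set u : ℕ → ℝ := fun m => r ^ m * Real.sin (m * θ) with hu_def
  have hu : ∀ m : ℕ, u m = r ^ m * Real.sin (m * θ) := fun m => rfl
  have hu0 : u 0 = 0 := by simp [hu_def]
  have hrpos : 0 < r := Real.sqrt_pos.mpr (by positivity)
  have hrec_u : ∀ n : ℕ, β * lam * u (n + 2) + Khat L1 K1 rho β * u n
      = (lam + β * Kbar L1 K1 rho β) * u (n + 1) :=
    fun n => urec hβ0 hlam_pos hKh hid hr u hu n
  have hsin_pos : ∀ m : ℕ, 1 ≤ m → m ≤ T → 0 < Real.sin ((m : ℝ) * θ) := by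
    intro m h1 h2
    apply Real.sin_pos_of_pos_of_lt_pi
    · have : (0:ℝ) < (m : ℝ) := by exact_mod_cast h1
      positivity
    · calc (m : ℝ) * θ ≤ (T : ℝ) * θ := by
            apply mul_le_mul_of_nonneg_right _ hθ0.le
            exact_mod_cast h2
        _ < Real.pi := hθT
  have hupos : ∀ m : ℕ, 1 ≤ m → m ≤ T → 0 < u m := fun m h1 h2 =>
    mul_pos (pow_pos hrpos m) (hsin_pos m h1 h2)
  set w : Fin T → ℝ := fun j => u ((j : ℕ) + 1) with hw_def
  have hw : ∀ j : Fin T, 0 < w j := fun j => hupos _ (by omega) (by have := j.isLt; omega)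
  have hSdef : ∀ i : Fin T, (AT L1 K1 rho β T).mulVec w i
      = ∑ j, AT L1 K1 rho β T i j * u ((j : ℕ) + 1) := fun i => rfl
  have hdiff : ∀ i i' : Fin T, (i : ℕ) + 1 = (i' : ℕ) →
      (AT L1 K1 rho β T).mulVec w i - β * (AT L1 K1 rho β T).mulVec w i'
        = (Kbar L1 K1 rho β + Lbar L1 K1 β * K1 / rho) * u i
          - β * Kbar L1 K1 rho β * u ((i : ℕ) + 1) := by
    intro i i' h'
    rw [hSdef i, hSdef i', Finset.mul_sum, ← Finset.sum_sub_distrib]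
    have hterm : ∀ j : Fin T, AT L1 K1 rho β T i j * u ((j : ℕ) + 1)
        - β * (AT L1 K1 rho β T i' j * u ((j : ℕ) + 1))
        = (if (j : ℕ) + 1 = (i : ℕ) then Kbar L1 K1 rho β + Lbar L1 K1 β * K1 / rho else 0)
            * u ((j : ℕ) + 1)
          + (if (j : ℕ) = (i : ℕ) then -(β * Kbar L1 K1 rho β) else 0) * u ((j : ℕ) + 1) := by
      intro j
      have hrow := AT_row_diff L1 K1 rho β i i' j h'
      linear_combination u ((j : ℕ) + 1) * hrow
    rw [Finset.sum_congr rfl fun j _ => hterm j, Finset.sum_add_distrib,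
      sum_shift u hu0 _ (i : ℕ) (le_of_lt i.isLt), sum_diag u _ (i : ℕ) i.isLt]
    ring
  have hrec : ∀ i i' : Fin T, (i : ℕ) + 1 = (i' : ℕ) →
      (AT L1 K1 rho β T).mulVec w i - lam * w i
        = β * ((AT L1 K1 rho β T).mulVec w i' - lam * w i') := by
    intro i i' h'
    have h1 := hdiff i i' h'
    have h2 := hrec_u (i : ℕ)
    have hw_i : w i = u ((i : ℕ) + 1) := rfl
    have hw_i' : w i' = u ((i : ℕ) + 2) := by
      simp only [hw_def]
      rw [show (i' : ℕ) + 1 = (i : ℕ) + 2 by omega]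
    rw [hw_i, hw_i']
    linear_combination h1 + h2 + u (i : ℕ) * hKheq
  have hlast : (AT L1 K1 rho β T).mulVec w ⟨T - 1, by omega⟩
      = Khat L1 K1 rho β * u (T - 1) + ((L1 * K1 / rho) * β) * u T := by
    rw [hSdef]
    have hterm : ∀ j : Fin T, AT L1 K1 rho β T ⟨T - 1, by omega⟩ j * u ((j : ℕ) + 1)
        = (if (j : ℕ) + 1 = T - 1 then Kbar L1 K1 rho β + Lbar L1 K1 β * K1 / rho else 0)
            * u ((j : ℕ) + 1)
          + (if (j : ℕ) + 1 = T then (L1 * K1 / rho) * β else 0) * u ((j : ℕ) + 1) := by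
      intro j
      have hrow := AT_last_row L1 K1 rho β hT2 j
      linear_combination u ((j : ℕ) + 1) * hrow
    rw [Finset.sum_congr rfl fun j _ => hterm j, Finset.sum_add_distrib,
      sum_shift u hu0 _ (T - 1) (by omega), sum_shift u hu0 _ T le_rfl, hKheq]
  exact ⟨w, u, fun j => rfl, hw, hupos, hu, hrec, hlast, hrec_u, hs_pos, hid, hlow2⟩

private lemma core_lower (L1 K1 rho β : ℝ) (hL1 : 0 < L1) (hK1 : 0 < K1) (hrho : 0 < rho)
    (hβ0 : 0 < β) (hβ1 : β < 1) (hβK : β * K1 < 2) {T : ℕ} (hT2 : 2 ≤ T)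
    {θ cθ s : ℝ} (hθ0 : 0 < θ) (hθT : (T : ℝ) * θ < Real.pi)
    (hsinT1 : Real.sin (((T : ℝ) + 1) * θ) = 0)
    (hcθ : cθ = Real.cos θ) (hcθ0 : 0 < cθ)
    (hq : Kbar L1 K1 rho β ≤ Khat L1 K1 rho β * cθ ^ 2)
    (hs : s = Real.sqrt (Khat L1 K1 rho β * β) * cθ
      + Real.sqrt ((Khat L1 K1 rho β * cθ ^ 2 - Kbar L1 K1 rho β) * β)) :
    s ^ 2 ≤ specRad (AT L1 K1 rho β T) := by
  obtain ⟨hLb, hKb, hKh, hKheq, hd, hdc⟩ := consts L1 K1 rho β hL1 hK1 hrho hβ0 hβ1 hβK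
  obtain ⟨w, u, hwu, hw, hupos, hu, hrec, hlast, hrec_u, hs_pos, hid, hlow2⟩ :=
    core_setup L1 K1 rho β hL1 hK1 hrho hβ0 hβ1 hβK hT2 hθ0 hθT hcθ hcθ0 hq hs
  have huT1 : u (T + 1) = 0 := by
    rw [hu (T + 1)]
    have : ((T + 1 : ℕ) : ℝ) * θ = ((T : ℝ) + 1) * θ := by push_cast; ring
    rw [this, hsinT1, mul_zero]
  have hbound := hrec_u (T - 1)
  rw [show T - 1 + 2 = T + 1 by omega, show T - 1 + 1 = T by omega, huT1, mul_zero,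
    zero_add] at hbound
  have hwlast : w ⟨T - 1, by omega⟩ = u T := by
    rw [hwu ⟨T - 1, by omega⟩]
    congr 1
    simp
    omega
  have huT : 0 ≤ u T := (hupos T (by omega) le_rfl).le
  have hslack : 0 ≤ (AT L1 K1 rho β T).mulVec w ⟨T - 1, by omega⟩
      - s ^ 2 * w ⟨T - 1, by omega⟩ := by
    rw [hlast, hwlast]
    have h9 : 0 ≤ (β * Kbar L1 K1 rho β + (L1 * K1 / rho) * β) * u T := by
      apply mul_nonneg _ huT
      have : 0 ≤ (L1 * K1 / rho) * β := mul_nonneg hd.le hβ0.le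
      nlinarith [mul_pos hβ0 hKb]
    linarith [hbound, h9]
  have htel := telescope (by omega) ((AT L1 K1 rho β T).mulVec w) w β (s ^ 2) hrec
  have hfinal : ∀ i, s ^ 2 * w i ≤ (AT L1 K1 rho β T).mulVec w i := by
    intro i
    have h1 := htel i
    have h2 : 0 ≤ β ^ (T - 1 - (i : ℕ)) * ((AT L1 K1 rho β T).mulVec w ⟨T - 1, by omega⟩
        - s ^ 2 * w ⟨T - 1, by omega⟩) := mul_nonneg (pow_nonneg hβ0.le _) hslack
    linarith
  exact le_specRad_of_le_mulVec (by omega) _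
    (fun i j => AT_nonneg L1 K1 rho β hL1 hK1 hrho hβ0 hβ1 hβK i j) w hw (sq_nonneg s) hfinal

private lemma core_upper (L1 K1 rho β : ℝ) (hL1 : 0 < L1) (hK1 : 0 < K1) (hrho : 0 < rho)
    (hβ0 : 0 < β) (hβ1 : β < 1) (hβK : β * K1 < 2) {T : ℕ} (hT2 : 2 ≤ T)
    {θ cθ s : ℝ} (hθ0 : 0 < θ) (hθT2 : (T : ℝ) * θ ≤ Real.pi / 2)
    (hcθ : cθ = Real.cos θ) (hcθ0 : 0 < cθ)
    (hqd : Kbar L1 K1 rho β + L1 * K1 / rho ≤ Khat L1 K1 rho β * cθ ^ 2)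
    (hs : s = Real.sqrt (Khat L1 K1 rho β * β) * cθ
      + Real.sqrt ((Khat L1 K1 rho β * cθ ^ 2 - Kbar L1 K1 rho β) * β)) :
    specRad (AT L1 K1 rho β T) ≤ s ^ 2 := by
  obtain ⟨hLb, hKb, hKh, hKheq, hd, hdc⟩ := consts L1 K1 rho β hL1 hK1 hrho hβ0 hβ1 hβK
  have hπ := Real.pi_pos
  have hθT : (T : ℝ) * θ < Real.pi := by linarith
  have hq : Kbar L1 K1 rho β ≤ Khat L1 K1 rho β * cθ ^ 2 := by linarith
  obtain ⟨w, u, hwu, hw, hupos, hu, hrec, hlast, hrec_u, hs_pos, hid, hlow2⟩ :=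
    core_setup L1 K1 rho β hL1 hK1 hrho hβ0 hβ1 hβK hT2 hθ0 hθT hcθ hcθ0 hq hs
  set lam := s ^ 2 with hlam_def
  have hlam_pos : 0 < lam := pow_pos hs_pos 2
  set r := Real.sqrt (Khat L1 K1 rho β / (β * lam)) with hr
  have hrpos : 0 < r := Real.sqrt_pos.mpr (by positivity)
  have hKr : Real.sqrt (β * lam * Khat L1 K1 rho β) * r = Khat L1 K1 rho β := by
    rw [hr]; exact sqrt_hKr hβ0 hlam_pos hKh
  have hT1 : (1 : ℝ) ≤ (T : ℝ) := by exact_mod_cast Nat.one_le_of_lt hT2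
  have hθle : θ ≤ (T : ℝ) * θ := by nlinarith
  have hsinTm1 : Real.sin (((T - 1 : ℕ) : ℝ) * θ)
      ≤ Real.sin ((T : ℝ) * θ) * Real.cos θ := by
    have hcast : ((T - 1 : ℕ) : ℝ) = (T : ℝ) - 1 := by
      push_cast [Nat.cast_sub (show 1 ≤ T by omega)]
      ring
    rw [hcast, show ((T : ℝ) - 1) * θ = (T : ℝ) * θ - θ by ring, Real.sin_sub]
    have h1 : 0 ≤ Real.cos ((T : ℝ) * θ) := by
      apply Real.cos_nonneg_of_mem_Icc
      constructor
      · have : 0 ≤ (T : ℝ) * θ := by positivity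
        linarith
      · exact hθT2
    have h2 : 0 ≤ Real.sin θ :=
      Real.sin_nonneg_of_nonneg_of_le_pi hθ0.le (by linarith)
    nlinarith [mul_nonneg h1 h2]
  have hwlast : w ⟨T - 1, by omega⟩ = u T := by
    rw [hwu ⟨T - 1, by omega⟩]
    congr 1
    simp
    omega
  have huT : 0 ≤ u T := (hupos T (by omega) le_rfl).le
  have hlam_big : β * Kbar L1 K1 rho β + 2 * (L1 * K1 / rho) * β ≤ lam := by
    have h1 : β * (Kbar L1 K1 rho β + 2 * (L1 * K1 / rho))
        ≤ β * (2 * Khat L1 K1 rho β * cθ ^ 2 - Kbar L1 K1 rho β) := by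
      apply mul_le_mul_of_nonneg_left _ hβ0.le
      linarith
    calc β * Kbar L1 K1 rho β + 2 * (L1 * K1 / rho) * β
        = β * (Kbar L1 K1 rho β + 2 * (L1 * K1 / rho)) := by ring
      _ ≤ β * (2 * Khat L1 K1 rho β * cθ ^ 2 - Kbar L1 K1 rho β) := h1
      _ ≤ lam := hlow2
  have hpowT : r ^ T = r ^ (T - 1) * r := by
    conv_lhs => rw [show T = (T - 1) + 1 by omega]
    rw [pow_succ]
  have e1 : Khat L1 K1 rho β * u (T - 1)
      ≤ Real.sqrt (β * lam * Khat L1 K1 rho β) * Real.cos θ * u T := by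
    rw [hu (T - 1), hu T]
    calc Khat L1 K1 rho β * (r ^ (T - 1) * Real.sin (((T - 1 : ℕ) : ℝ) * θ))
        ≤ Khat L1 K1 rho β * (r ^ (T - 1) * (Real.sin ((T : ℝ) * θ) * Real.cos θ)) := by
          apply mul_le_mul_of_nonneg_left _ hKh.le
          exact mul_le_mul_of_nonneg_left hsinTm1 (pow_nonneg hrpos.le _)
      _ = Real.sqrt (β * lam * Khat L1 K1 rho β) * Real.cos θ
            * (r ^ T * Real.sin ((T : ℝ) * θ)) := by
          rw [hpowT]
          linear_combination (r ^ (T - 1) * Real.sin ((T : ℝ) * θ) * Real.cos θ) * hKr.symm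
  have hslack : (AT L1 K1 rho β T).mulVec w ⟨T - 1, by omega⟩
      - lam * w ⟨T - 1, by omega⟩ ≤ 0 := by
    rw [hlast, hwlast]
    have h10 : (β * Kbar L1 K1 rho β + 2 * (L1 * K1 / rho) * β - lam) / 2 * u T ≤ 0 := by
      apply mul_nonpos_of_nonpos_of_nonneg _ huT
      linarith
    have e2 : Real.sqrt (β * lam * Khat L1 K1 rho β) * Real.cos θ * u T
        = (lam + β * Kbar L1 K1 rho β) / 2 * u T := by
      rw [show Real.sqrt (β * lam * Khat L1 K1 rho β) * Real.cos θ
        = (lam + β * Kbar L1 K1 rho β) / 2 by linarith]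
    linarith [e1, e2, h10]
  have htel := telescope (by omega) ((AT L1 K1 rho β T).mulVec w) w β lam hrec
  have hfinal : ∀ i, (AT L1 K1 rho β T).mulVec w i ≤ lam * w i := by
    intro i
    have h1 := htel i
    have h2 : β ^ (T - 1 - (i : ℕ)) * ((AT L1 K1 rho β T).mulVec w ⟨T - 1, by omega⟩
        - lam * w ⟨T - 1, by omega⟩) ≤ 0 :=
      mul_nonpos_of_nonneg_of_nonpos (pow_nonneg hβ0.le _) hslack
    linarith
  exact specRad_le_of_mulVec_le (by omega) _
    (fun i j => AT_nonneg L1 K1 rho β hL1 hK1 hrho hβ0 hβ1 hβK i j) w hw hlam_pos.le hfinal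

end CoreLemmas

end AuxProof

set_option maxHeartbeats 1600000 in
/-- Refined asymptotic two-sided bound on `√(ρ(A_T))` (Corollary 3.11), together with
the consequence for the angle `θ_T ∈ (0, π)` defined by
`ρ(A_T) = -K̄β + 2√(ρ(A_T) β K̂) cos θ_T`. -/
theorem stmt10 (L1 K1 rho β : ℝ)
    (hL1 : 0 < L1) (hK1 : 0 < K1) (hrho : 0 < rho)
    (hβ0 : 0 < β) (hβ1 : β < 1) (hβK : β * K1 < 2) :
    ∃ T0 : ℕ, ∀ T : ℕ, T0 ≤ T →
      (Real.sqrt (Khat L1 K1 rho β * β) * Real.cos (Real.pi / ((T : ℝ) + 1))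
          + Real.sqrt ((Khat L1 K1 rho β * (Real.cos (Real.pi / ((T : ℝ) + 1))) ^ 2
              - Kbar L1 K1 rho β) * β)
        ≤ Real.sqrt (specRad (AT L1 K1 rho β T))
      ∧ Real.sqrt (specRad (AT L1 K1 rho β T))
        ≤ Real.sqrt (Khat L1 K1 rho β * β) * Real.cos (Real.pi / (2 * (T : ℝ) + 1))
          + Real.sqrt ((Khat L1 K1 rho β * (Real.cos (Real.pi / (2 * (T : ℝ) + 1))) ^ 2
              - Kbar L1 K1 rho β) * β))
      ∧ ∀ θ : ℝ, θ ∈ Set.Ioo 0 Real.pi →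
          specRad (AT L1 K1 rho β T)
            = -(Kbar L1 K1 rho β * β)
              + 2 * Real.sqrt (specRad (AT L1 K1 rho β T) * β * Khat L1 K1 rho β)
                * Real.cos θ →
          Real.cos (Real.pi / ((T : ℝ) + 1)) ≤ Real.cos θ
            ∧ Real.cos θ ≤ Real.cos (Real.pi / (2 * (T : ℝ) + 1)) := by
  classical
  obtain ⟨hLb, hKb, hKh, hKheq, hd, hdc⟩ := consts L1 K1 rho β hL1 hK1 hrho hβ0 hβ1 hβK
  have hπ := Real.pi_pos
  -- eventual cosine condition
  have hlim1 : Filter.Tendsto (fun T : ℕ => ((T : ℝ) + 1)) Filter.atTop Filter.atTop :=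
    Filter.tendsto_atTop_add_const_right _ 1 tendsto_natCast_atTop_atTop
  have h1 : Filter.Tendsto (fun T : ℕ => Real.pi / ((T : ℝ) + 1)) Filter.atTop (nhds 0) :=
    Filter.Tendsto.div_atTop tendsto_const_nhds hlim1
  have h2 : Filter.Tendsto (fun T : ℕ => Real.cos (Real.pi / ((T : ℝ) + 1)))
      Filter.atTop (nhds 1) := by
    have := (Real.continuous_cos.tendsto 0).comp h1
    simpa [Function.comp_def] using this
  have h3 : Filter.Tendsto
      (fun T : ℕ => Khat L1 K1 rho β * (Real.cos (Real.pi / ((T : ℝ) + 1))) ^ 2)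
      Filter.atTop (nhds (Khat L1 K1 rho β * 1 ^ 2)) :=
    (h2.pow 2).const_mul _
  have hlt : Kbar L1 K1 rho β + L1 * K1 / rho < Khat L1 K1 rho β * 1 ^ 2 := by
    rw [one_pow, mul_one]
    linarith [hKheq, hdc]
  have hev := Filter.Tendsto.eventually_const_le hlt h3
  rw [Filter.eventually_atTop] at hev
  obtain ⟨T1, hT1⟩ := hev
  refine ⟨max T1 2, fun T hT => ?_⟩
  have hT2 : 2 ≤ T := le_trans (le_max_right _ _) hT
  have hqm0 := hT1 T (le_trans (le_max_left _ _) hT)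
  have hTc : (2 : ℝ) ≤ (T : ℝ) := by exact_mod_cast hT2
  set θm := Real.pi / ((T : ℝ) + 1) with hθm_def
  set θp := Real.pi / (2 * (T : ℝ) + 1) with hθp_def
  have hθm0 : 0 < θm := div_pos hπ (by linarith)
  have hθp0 : 0 < θp := div_pos hπ (by linarith)
  have hθm3 : θm ≤ Real.pi / 3 := by
    rw [hθm_def]
    apply div_le_div_of_nonneg_left hπ.le (by norm_num)
    linarith
  have hθmlt : θm < Real.pi / 2 := by linarith
  have hcm0 : 0 < Real.cos θm := Real.cos_pos_of_mem_Ioo ⟨by linarith, hθmlt⟩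
  have hθpm : θp ≤ θm := by
    rw [hθm_def, hθp_def]
    apply div_le_div_of_nonneg_left hπ.le (by linarith)
    linarith
  have hcmp : Real.cos θm ≤ Real.cos θp :=
    Real.cos_le_cos_of_nonneg_of_le_pi hθp0.le (by linarith) hθpm
  have hcp0 : 0 < Real.cos θp := lt_of_lt_of_le hcm0 hcmp
  have hTθm : (T : ℝ) * θm < Real.pi := by
    rw [hθm_def, ← mul_div_assoc, div_lt_iff₀ (by linarith : (0:ℝ) < (T : ℝ) + 1)]
    nlinarith
  have hTθp : (T : ℝ) * θp ≤ Real.pi / 2 := by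
    rw [hθp_def, ← mul_div_assoc, div_le_iff₀ (by linarith : (0:ℝ) < 2 * (T : ℝ) + 1)]
    nlinarith
  have hsinT1 : Real.sin (((T : ℝ) + 1) * θm) = 0 := by
    rw [hθm_def, mul_div_cancel₀ _ (by linarith : ((T : ℝ) + 1) ≠ 0)]
    exact Real.sin_pi
  have hqm : Kbar L1 K1 rho β + L1 * K1 / rho
      ≤ Khat L1 K1 rho β * (Real.cos θm) ^ 2 := hqm0
  have hqp : Kbar L1 K1 rho β + L1 * K1 / rho
      ≤ Khat L1 K1 rho β * (Real.cos θp) ^ 2 := by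
    refine le_trans hqm ?_
    have hsq : Real.cos θm ^ 2 ≤ Real.cos θp ^ 2 := pow_le_pow_left₀ hcm0.le hcmp 2
    exact mul_le_mul_of_nonneg_left hsq hKh.le
  set sm := Real.sqrt (Khat L1 K1 rho β * β) * Real.cos θm
    + Real.sqrt ((Khat L1 K1 rho β * (Real.cos θm) ^ 2 - Kbar L1 K1 rho β) * β) with hsm_def
  set sp := Real.sqrt (Khat L1 K1 rho β * β) * Real.cos θp
    + Real.sqrt ((Khat L1 K1 rho β * (Real.cos θp) ^ 2 - Kbar L1 K1 rho β) * β) with hsp_def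
  have hsm_pos : 0 < sm := by
    rw [hsm_def]
    exact add_pos_of_pos_of_nonneg
      (mul_pos (Real.sqrt_pos.mpr (mul_pos hKh hβ0)) hcm0) (Real.sqrt_nonneg _)
  have hsp_pos : 0 < sp := by
    rw [hsp_def]
    exact add_pos_of_pos_of_nonneg
      (mul_pos (Real.sqrt_pos.mpr (mul_pos hKh hβ0)) hcp0) (Real.sqrt_nonneg _)
  have hlowm : sm ^ 2 ≤ specRad (AT L1 K1 rho β T) :=
    core_lower L1 K1 rho β hL1 hK1 hrho hβ0 hβ1 hβK hT2 hθm0 hTθm hsinT1 rfl hcm0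
      (by linarith) hsm_def
  have huppp : specRad (AT L1 K1 rho β T) ≤ sp ^ 2 :=
    core_upper L1 K1 rho β hL1 hK1 hrho hβ0 hβ1 hβK hT2 hθp0 hTθp rfl hcp0 hqp hsp_def
  have hm : sm ≤ Real.sqrt (specRad (AT L1 K1 rho β T)) := by
    have := Real.sqrt_le_sqrt hlowm
    rwa [Real.sqrt_sq hsm_pos.le] at this
  have hp : Real.sqrt (specRad (AT L1 K1 rho β T)) ≤ sp := by
    have := Real.sqrt_le_sqrt huppp
    rwa [Real.sqrt_sq hsp_pos.le] at this
  refine ⟨⟨hm, hp⟩, ?_⟩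
  intro θ hθI hθeq
  have hρ_pos : 0 < specRad (AT L1 K1 rho β T) := lt_of_lt_of_le (pow_pos hsm_pos 2) hlowm
  set ρ := specRad (AT L1 K1 rho β T) with hρ_def
  set sr := Real.sqrt ρ with hsr_def
  have hsr_pos : 0 < sr := Real.sqrt_pos.mpr hρ_pos
  have hs2 : sr ^ 2 = ρ := Real.sq_sqrt hρ_pos.le
  set a := Real.sqrt (β * Khat L1 K1 rho β) with ha_def
  have ha_pos : 0 < a := Real.sqrt_pos.mpr (mul_pos hβ0 hKh)
  have hsqrt_eq : Real.sqrt (ρ * β * Khat L1 K1 rho β) = sr * a := by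
    rw [← hs2, show sr ^ 2 * β * Khat L1 K1 rho β = sr ^ 2 * (β * Khat L1 K1 rho β) by ring,
      Real.sqrt_mul (sq_nonneg _), Real.sqrt_sq hsr_pos.le, ha_def]
  rw [hsqrt_eq] at hθeq
  have e1 : sr ^ 2 + Kbar L1 K1 rho β * β = 2 * (sr * a) * Real.cos θ := by
    rw [hs2]
    linarith [hθeq]
  obtain ⟨_, hidm, hlow2m⟩ := eigen_rel hβ0 hKh hcm0 (by linarith) hsm_def
  obtain ⟨_, hidp, _⟩ := eigen_rel hβ0 hKh hcp0 (by linarith) hsp_def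
  have hsqm : Real.sqrt (β * sm ^ 2 * Khat L1 K1 rho β) = sm * a := by
    rw [show β * sm ^ 2 * Khat L1 K1 rho β = sm ^ 2 * (β * Khat L1 K1 rho β) by ring,
      Real.sqrt_mul (sq_nonneg _), Real.sqrt_sq hsm_pos.le, ha_def]
  have hsqp : Real.sqrt (β * sp ^ 2 * Khat L1 K1 rho β) = sp * a := by
    rw [show β * sp ^ 2 * Khat L1 K1 rho β = sp ^ 2 * (β * Khat L1 K1 rho β) by ring,
      Real.sqrt_mul (sq_nonneg _), Real.sqrt_sq hsp_pos.le, ha_def]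
  rw [hsqm] at hidm
  rw [hsqp] at hidp
  have e2 : sm ^ 2 + Kbar L1 K1 rho β * β = 2 * (sm * a) * Real.cos θm := by linarith [hidm]
  have e3 : sp ^ 2 + Kbar L1 K1 rho β * β = 2 * (sp * a) * Real.cos θp := by linarith [hidp]
  have hKbβ : Kbar L1 K1 rho β * β ≤ sm ^ 2 := by
    have h1 : Kbar L1 K1 rho β ≤ 2 * Khat L1 K1 rho β * Real.cos θm ^ 2 - Kbar L1 K1 rho β := by
      linarith
    have h2 := mul_le_mul_of_nonneg_left h1 hβ0.le
    linarith [hlow2m]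
  constructor
  · have hfac : 0 ≤ (sr - sm) * (sr * sm - Kbar L1 K1 rho β * β) := by
      apply mul_nonneg (sub_nonneg.mpr hm)
      have h7 : sm * sm ≤ sr * sm := mul_le_mul_of_nonneg_right hm hsm_pos.le
      exact sub_nonneg.mpr (hKbβ.trans ((le_of_eq (pow_two sm)).trans h7))
    have h5 : 2 * a * sr * sm * (Real.cos θ - Real.cos θm)
        = (sr - sm) * (sr * sm - Kbar L1 K1 rho β * β) := by
      linear_combination sr * e2 - sm * e1
    have h4 : 0 < 2 * a * sr * sm :=
      mul_pos (mul_pos (mul_pos two_pos ha_pos) hsr_pos) hsm_pos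
    rw [← h5] at hfac
    have h6 := (mul_nonneg_iff_of_pos_left h4).mp hfac
    exact sub_nonneg.mp h6
  · have hfac : 0 ≤ (sp - sr) * (sr * sp - Kbar L1 K1 rho β * β) := by
      apply mul_nonneg (sub_nonneg.mpr hp)
      have h7 : sm * sm ≤ sr * sr := mul_le_mul hm hm hsm_pos.le hsr_pos.le
      have h7' : sr * sr ≤ sr * sp := mul_le_mul_of_nonneg_left hp hsr_pos.le
      exact sub_nonneg.mpr (hKbβ.trans (((le_of_eq (pow_two sm)).trans h7).trans h7'))
    have h5 : 2 * a * sr * sp * (Real.cos θp - Real.cos θ)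
        = (sp - sr) * (sr * sp - Kbar L1 K1 rho β * β) := by
      linear_combination sp * e1 - sr * e3
    have h4 : 0 < 2 * a * sr * sp :=
      mul_pos (mul_pos (mul_pos two_pos ha_pos) hsr_pos) hsp_pos
    rw [← h5] at hfac
    have h6 := (mul_nonneg_iff_of_pos_left h4).mp hfac
    exact sub_nonneg.mp h6
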